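/- Let κ : [0,T] → ℝ be continuous and let τ₁ solve the Riccati equation τ₁' = (b₂²/m₂)τ₁² + 2aτ₁ - l₂ on [0,T] with τ₁(0) = -r₂, where b₂, m₂, a, l₂ : [0,T] → ℝ are continuous, m₂ > 0, l₂ ≥ 0, r₂ ≥ 0. Then τ₁(t) ≤ 0 for all t ∈ [0,T], and if r₂ > 0 or l₂ > 0 pointwise on an initial interval, then τ₁(t) < 0 for all t ∈ (0,T]. -/

import Mathlib

open Set

theorem tau1_nonpositive (T : ℝ) (hT : 0 < T) (r₂ : ℝ) (hr₂ : 0 ≤ r₂)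
    (a b₂ m₂ l₂ τ₁ : ℝ → ℝ)
    (ha : ContinuousOn a (Icc 0 T)) (hb₂ : ContinuousOn b₂ (Icc 0 T))
    (hm₂c : ContinuousOn m₂ (Icc 0 T)) (hl₂c : ContinuousOn l₂ (Icc 0 T))
    (hm₂ : ∀ t ∈ Icc (0:ℝ) T, 0 < m₂ t) (hl₂ : ∀ t ∈ Icc (0:ℝ) T, 0 ≤ l₂ t)
    (hτ₁0 : τ₁ 0 = -r₂)
    (hτ₁ : ∀ t ∈ Icc (0:ℝ) T, HasDerivAt τ₁
      (b₂ t ^ 2 / m₂ t * τ₁ t ^ 2 + 2 * a t * τ₁ t - l₂ t) t) :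
    (∀ t ∈ Icc (0:ℝ) T, τ₁ t ≤ 0) ∧
    ((0 < r₂ ∨ ∃ ε > 0, ∀ t ∈ Icc (0:ℝ) ε, 0 < l₂ t) →
      ∀ t ∈ Ioc (0:ℝ) T, τ₁ t < 0) := by
  -- τ₁ is continuous on Icc 0 T
  have hτc : ContinuousOn τ₁ (Icc 0 T) := fun t ht =>
    ((hτ₁ t ht).continuousAt).continuousWithinAt
  -- g = b₂²/m₂ * τ₁ + 2a, continuous on Icc
  set g : ℝ → ℝ := fun t => b₂ t ^ 2 / m₂ t * τ₁ t + 2 * a t with hg_def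
  have hgc : ContinuousOn g (Icc 0 T) := by
    apply ContinuousOn.add
    · exact (((hb₂.pow 2).div hm₂c (fun t ht => (hm₂ t ht).ne')).mul hτc)
    · exact (continuousOn_const.mul ha)
  -- extend g continuously to ℝ
  set G : ℝ → ℝ := IccExtend hT.le ((Icc (0:ℝ) T).restrict g) with hG_def
  have hGc : Continuous G := by
    apply Continuous.Icc_extend'
    exact continuousOn_iff_continuous_restrict.mp hgc
  have hGeq : ∀ t ∈ Icc (0:ℝ) T, G t = g t := by
    intro t ht
    simp [hG_def, IccExtend_of_mem hT.le _ ht]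
    rfl
  -- F t = ∫₀ᵗ G
  set F : ℝ → ℝ := fun t => ∫ x in (0:ℝ)..t, G x with hF_def
  have hF : ∀ t : ℝ, HasDerivAt F (G t) t := by
    intro t
    exact intervalIntegral.integral_hasDerivAt_right
      (hGc.intervalIntegrable 0 t)
      (hGc.stronglyMeasurable.stronglyMeasurableAtFilter)
      hGc.continuousAt
  -- φ = τ₁ * exp(-F)
  set φ : ℝ → ℝ := fun t => τ₁ t * Real.exp (-F t) with hφ_def
  have hφ' : ∀ t ∈ Icc (0:ℝ) T, HasDerivAt φ (-(l₂ t * Real.exp (-F t))) t := by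
    intro t ht
    have hE : HasDerivAt (fun s => Real.exp (-F s)) (-G t * Real.exp (-F t)) t := by
      have := (((hF t).neg).exp)
      convert this using 1
      · rfl
      · simp only [Pi.neg_apply]; ring
    have := (hτ₁ t ht).mul hE
    refine this.congr_deriv ?_
    rw [hGeq t ht]
    simp only [hg_def]
    ring
  have hφc : ContinuousOn φ (Icc 0 T) := fun t ht =>
    ((hφ' t ht).continuousAt).continuousWithinAt
  have hF0 : F 0 = 0 := intervalIntegral.integral_same
  have hφ0 : φ 0 = -r₂ := by simp [hφ_def, hτ₁0, hF0]
  -- φ is antitone on Icc 0 T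
  have hanti : AntitoneOn φ (Icc 0 T) := by
    apply antitoneOn_of_deriv_nonpos (convex_Icc 0 T) hφc
    · intro x hx
      rw [interior_Icc] at hx
      exact (hφ' x (Ioo_subset_Icc_self hx)).differentiableAt.differentiableWithinAt
    · intro x hx
      rw [interior_Icc] at hx
      rw [(hφ' x (Ioo_subset_Icc_self hx)).deriv]
      have := hl₂ x (Ioo_subset_Icc_self hx)
      have := Real.exp_pos (-F x)
      nlinarith
  -- helper: φ t ≤ 0 → τ₁ t ≤ 0, etc.
  have key : ∀ t ∈ Icc (0:ℝ) T, φ t ≤ 0 := by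
    intro t ht
    have := hanti (left_mem_Icc.mpr hT.le) ht ht.1
    rw [hφ0] at this
    linarith
  constructor
  · intro t ht
    have h1 := key t ht
    have h2 := Real.exp_pos (-F t)
    simp only [hφ_def] at h1
    nlinarith
  · rintro hcase t ht
    have htI : t ∈ Icc (0:ℝ) T := ⟨ht.1.le, ht.2⟩
    have hE := Real.exp_pos (-F t)
    rcases hcase with hr | ⟨ε, hε, hlε⟩
    · -- r₂ > 0 : φ t ≤ φ 0 = -r₂ < 0
      have := hanti (left_mem_Icc.mpr hT.le) htI ht.1.le
      rw [hφ0] at this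
      have hφt : φ t < 0 := by linarith
      simp only [hφ_def] at hφt
      nlinarith
    · -- l₂ > 0 on [0, ε]
      set m := min ε T with hm_def
      have hm0 : 0 < m := lt_min hε hT
      have hmT : m ≤ T := min_le_right _ _
      have hsub : Icc (0:ℝ) m ⊆ Icc 0 T := Icc_subset_Icc le_rfl hmT
      -- φ strictly decreasing on Icc 0 m
      have hstrict : StrictAntiOn φ (Icc 0 m) := by
        apply strictAntiOn_of_deriv_neg (convex_Icc 0 m) (hφc.mono hsub)
        intro x hx
        rw [interior_Icc] at hx
        have hxT : x ∈ Icc (0:ℝ) T := hsub (Ioo_subset_Icc_self hx)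
        rw [(hφ' x hxT).deriv]
        have hxε : x ∈ Icc (0:ℝ) ε := ⟨hx.1.le, hx.2.le.trans (min_le_left _ _)⟩
        have := hlε x hxε
        have := Real.exp_pos (-F x)
        nlinarith
      set s := min t m with hs_def
      have hs0 : 0 < s := lt_min ht.1 hm0
      have hsm : s ≤ m := min_le_right _ _
      have hst : s ≤ t := min_le_left _ _
      have hφs : φ s < φ 0 :=
        hstrict (left_mem_Icc.mpr hm0.le) ⟨hs0.le, hsm⟩ hs0
      rw [hφ0] at hφs
      have hφt : φ t ≤ φ s := hanti (hsub ⟨hs0.le, hsm⟩) htI hst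
      have : φ t < 0 := by linarith
      simp only [hφ_def] at this
      nlinarith
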